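/- arXiv:2012.11603 — 4 statements merged into one kernel-verified Lean document; each statement's English description precedes it below -/
import Mathlib

section
/- Fix M ∈ {2,3,4,6}, let h = h_M be the standard order-M rotation matrix, and let φ be a real number. Then the operation (z₁,r₁,j₁)·(z₂,r₂,j₂) = (z₁ + z₂ + (φ/2)(r₁ × h^{j₁} r₂) mod 1, r₁ + h^{j₁} r₂, j₁ + j₂) on the set (ℝ/ℤ) × ℤ² × ℤ/M is a group law with identity (0,0,0); moreover the subgroup {(z,0,0) : z ∈ ℝ/ℤ} is central, and the quotient by this subgroup is isomorphic to the semidirect product ℤ² ⋊ ℤ/M in which the generator of ℤ/M acts on ℤ² by h. -/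
open Matrix

noncomputable section

/-- The standard order-`M` rotation matrix on `ℤ²`, for `M ∈ {2,3,4,6}`. -/
def hRot (M : ℕ) : Matrix (Fin 2) (Fin 2) ℤ :=
  if M = 2 then !![-1, 0; 0, -1]
  else if M = 3 then !![0, 1; -1, -1]
  else if M = 4 then !![0, 1; -1, 0]
  else if M = 6 then !![0, 1; -1, 1]
  else 1

/-- The cross product `(x,y) × (x',y') = x y' − y x'` of integer vectors. -/
def crossZ (r r' : Fin 2 → ℤ) : ℤ := r 0 * r' 1 - r 1 * r' 0

/-- The underlying set `(ℝ/ℤ) × ℤ² × ℤ/M` of the magnetic space group. -/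
abbrev MagSp (M : ℕ) : Type := AddCircle (1 : ℝ) × (Fin 2 → ℤ) × ZMod M

/-- The magnetic space group operation
`(z₁,r₁,j₁)·(z₂,r₂,j₂) = (z₁ + z₂ + (φ/2)(r₁ × h^{j₁} r₂) mod 1, r₁ + h^{j₁} r₂, j₁ + j₂)`. -/
def magSpMul (M : ℕ) (φ : ℝ) (g₁ g₂ : MagSp M) : MagSp M :=
  (g₁.1 + g₂.1 +
      (↑(φ / 2 * ((crossZ g₁.2.1 ((hRot M ^ (g₁.2.2).val).mulVec g₂.2.1) : ℤ) : ℝ)) :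
        AddCircle (1 : ℝ)),
    g₁.2.1 + (hRot M ^ (g₁.2.2).val).mulVec g₂.2.1,
    g₁.2.2 + g₂.2.2)

lemma crossZ_mulVec (A : Matrix (Fin 2) (Fin 2) ℤ) (x y : Fin 2 → ℤ) :
    crossZ (A.mulVec x) (A.mulVec y) = A.det * crossZ x y := by
  simp [crossZ, mulVec, dotProduct, Fin.sum_univ_two, det_fin_two]
  ring

lemma hRot_det (M : ℕ) : (hRot M).det = 1 := by
  unfold hRot
  split_ifs <;> simp [det_fin_two_of]

lemma hRot_pow_self (M : ℕ) (hM : M ∈ ({2, 3, 4, 6} : Set ℕ)) : hRot M ^ M = 1 := by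
  rcases hM with h | h | h | h <;> subst h <;> decide

lemma hRot_pow_mod (M : ℕ) (hM : M ∈ ({2, 3, 4, 6} : Set ℕ)) (n : ℕ) :
    hRot M ^ (n % M) = hRot M ^ n := by
  conv_rhs => rw [← Nat.mod_add_div n M, pow_add, pow_mul, hRot_pow_self M hM, one_pow, mul_one]

lemma neZero_of_mem (M : ℕ) (hM : M ∈ ({2, 3, 4, 6} : Set ℕ)) : NeZero M := by
  rcases hM with h | h | h | h <;> subst h <;> exact ⟨by norm_num⟩

lemma hRot_pow_val_add (M : ℕ) (hM : M ∈ ({2, 3, 4, 6} : Set ℕ)) (a b : ZMod M) :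
    hRot M ^ (a + b).val = hRot M ^ a.val * hRot M ^ b.val := by
  haveI := neZero_of_mem M hM
  rw [ZMod.val_add, hRot_pow_mod M hM, pow_add]

lemma coe_add_circ (x y : ℝ) :
    ((x : AddCircle (1 : ℝ)) + (y : AddCircle (1 : ℝ))) = ((x + y : ℝ) : AddCircle (1 : ℝ)) :=
  rfl

/-- The operation `magSpMul` is a group law on `(ℝ/ℤ) × ℤ² × ℤ/M` with identity `(0,0,0)`;
the subgroup `{(z,0,0)}` is central, and the quotient by it is isomorphic to the semidirect
product `ℤ² ⋊ ℤ/M` in which the generator of `ℤ/M` acts by `hRot M`. -/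
theorem magnetic_space_group_is_central_extension
    (M : ℕ) (hM : M ∈ ({2, 3, 4, 6} : Set ℕ)) (φ : ℝ) :
    (∀ g₁ g₂ g₃ : MagSp M,
      magSpMul M φ (magSpMul M φ g₁ g₂) g₃ = magSpMul M φ g₁ (magSpMul M φ g₂ g₃)) ∧
    (∀ g : MagSp M, magSpMul M φ (0, 0, 0) g = g) ∧
    (∀ g : MagSp M, magSpMul M φ g (0, 0, 0) = g) ∧
    (∀ g : MagSp M, ∃ g' : MagSp M,
      magSpMul M φ g g' = (0, 0, 0) ∧ magSpMul M φ g' g = (0, 0, 0)) ∧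
    (∀ (z : AddCircle (1 : ℝ)) (g : MagSp M),
      magSpMul M φ (z, 0, 0) g = magSpMul M φ g (z, 0, 0)) ∧
    (∃ π : MagSp M → (Fin 2 → ℤ) × ZMod M,
      (∀ g₁ g₂ : MagSp M,
        π (magSpMul M φ g₁ g₂) =
          ((π g₁).1 + (hRot M ^ ((π g₁).2).val).mulVec (π g₂).1, (π g₁).2 + (π g₂).2)) ∧
      Function.Surjective π ∧
      (∀ g : MagSp M, π g = (0, 0) ↔ ∃ z : AddCircle (1 : ℝ), g = (z, 0, 0))) := by
  haveI := neZero_of_mem M hM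
  refine ⟨?_, ?_, ?_, ?_, ?_, ?_⟩
  · -- associativity
    rintro ⟨z₁, r₁, j₁⟩ ⟨z₂, r₂, j₂⟩ ⟨z₃, r₃, j₃⟩
    simp only [magSpMul, Prod.mk.injEq]
    have hBD : (hRot M ^ (j₁ + j₂).val).mulVec r₃ =
        (hRot M ^ j₁.val).mulVec ((hRot M ^ j₂.val).mulVec r₃) := by
      rw [hRot_pow_val_add M hM, ← mulVec_mulVec]
    set B := hRot M ^ j₁.val with hB
    set v := (hRot M ^ j₂.val).mulVec r₃ with hv
    have hdet : B.det = 1 := by rw [hB, det_pow, hRot_det, one_pow]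
    have hc : crossZ (B.mulVec r₂) (B.mulVec v) = crossZ r₂ v := by
      rw [crossZ_mulVec, hdet, one_mul]
    have hint : crossZ r₁ (B.mulVec r₂) + crossZ (r₁ + B.mulVec r₂) ((hRot M ^ (j₁ + j₂).val).mulVec r₃)
        = crossZ r₂ v + crossZ r₁ (B.mulVec (r₂ + v)) := by
      rw [hBD, mulVec_add]
      simp only [crossZ, Pi.add_apply] at hc ⊢
      linear_combination hc
    refine ⟨?_, ?_, add_assoc _ _ _⟩
    · have hreal : (φ / 2 * (crossZ r₁ (B.mulVec r₂) : ℝ)) +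
          (φ / 2 * ((crossZ (r₁ + B.mulVec r₂) ((hRot M ^ (j₁ + j₂).val).mulVec r₃) : ℤ) : ℝ)) =
          (φ / 2 * ((crossZ r₂ v : ℤ) : ℝ)) + (φ / 2 * ((crossZ r₁ (B.mulVec (r₂ + v)) : ℤ) : ℝ)) := by
        have := congrArg (fun n : ℤ => φ / 2 * (n : ℝ)) hint
        push_cast at this ⊢
        linarith [this]
      have hcirc : ((φ / 2 * ((crossZ r₁ (B.mulVec r₂) : ℤ) : ℝ) : ℝ) : AddCircle (1 : ℝ)) +
          ((φ / 2 * ((crossZ (r₁ + B.mulVec r₂) ((hRot M ^ (j₁ + j₂).val).mulVec r₃) : ℤ) : ℝ) : ℝ) : AddCircle (1 : ℝ)) =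
          ((φ / 2 * ((crossZ r₂ v : ℤ) : ℝ) : ℝ) : AddCircle (1 : ℝ)) +
          ((φ / 2 * ((crossZ r₁ (B.mulVec (r₂ + v)) : ℤ) : ℝ) : ℝ) : AddCircle (1 : ℝ)) := by
        rw [coe_add_circ, coe_add_circ]
        exact congrArg _ hreal
      have key : ∀ (a b c d w₁ w₂ w₃ : AddCircle (1 : ℝ)), a + b = c + d →
          w₁ + w₂ + a + w₃ + b = w₁ + (w₂ + w₃ + c) + d := by
        intro a b c d w₁ w₂ w₃ h
        have e : w₁ + w₂ + a + w₃ + b = w₁ + (w₂ + w₃) + (a + b) := by abel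
        rw [e, h]; abel
      exact key _ _ _ _ _ _ _ hcirc
    · rw [hBD, mulVec_add]
      abel
  · -- left identity
    rintro ⟨z, r, j⟩
    simp only [magSpMul]
    simp [ZMod.val_zero, crossZ]
  · -- right identity
    rintro ⟨z, r, j⟩
    simp only [magSpMul]
    simp [crossZ, mulVec_zero]
  · -- inverses
    rintro ⟨z, r, j⟩
    refine ⟨(-z, -((hRot M ^ (-j).val).mulVec r), -j), ?_, ?_⟩
    · have hmul : hRot M ^ j.val * hRot M ^ (-j).val = 1 := by
        rw [← hRot_pow_val_add M hM, add_neg_cancel, ZMod.val_zero, pow_zero]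
      have hBr : (hRot M ^ j.val).mulVec (-((hRot M ^ (-j).val).mulVec r)) = -r := by
        rw [mulVec_neg, mulVec_mulVec, hmul, one_mulVec]
      simp only [magSpMul, hBr]
      have h0 : crossZ r (-r) = 0 := by simp [crossZ]; ring
      simp [h0]
    · have hBr : crossZ (-((hRot M ^ (-j).val).mulVec r)) ((hRot M ^ (-j).val).mulVec r) = 0 := by
        simp [crossZ]; ring
      simp only [magSpMul, hBr]
      simp
  · -- centrality
    rintro z ⟨z', r, j⟩
    simp only [magSpMul]
    simp [ZMod.val_zero, crossZ, mulVec_zero, add_comm]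
  · -- quotient
    refine ⟨fun g => g.2, fun g₁ g₂ => rfl, fun p => ⟨(0, p), rfl⟩, fun g => ?_⟩
    constructor
    · intro h
      exact ⟨g.1, Prod.ext rfl h⟩
    · rintro ⟨z, rfl⟩
      rfl
end
end

section
/- Fix M ∈ {2,3,4,6} and h = h_M, let G_space = ℤ² ⋊ ℤ/M be the group with multiplication (r₁,j₁)·(r₂,j₂) = (r₁ + h^{j₁} r₂, j₁ + j₂), let A be an abelian group, and let τ : ℤ² → A be a group homomorphism. Define f_τ((r₁,j₁),(r₂,j₂)) = τ((I + h + ⋯ + h^{j₁−1}) r₂), using the representative j₁ ∈ {0,…,M−1} (empty sum meaning the zero matrix). Then (i) f_τ is an A-valued 2-cocycle on G_space (trivial action), and (ii) f_τ is a 2-coboundary if and only if there exists a group homomorphism χ : ℤ² → A such that τ = χ ∘ (I − h). -/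
open Matrix

noncomputable section

/-- The underlying set `ℤ² × ℤ/M` of the space group `ℤ² ⋊ ℤ/M`. -/
abbrev SpaceGrp (M : ℕ) : Type := (Fin 2 → ℤ) × ZMod M

/-- The space group multiplication `(r₁,j₁)·(r₂,j₂) = (r₁ + h^{j₁} r₂, j₁ + j₂)`. -/
def spaceMul (M : ℕ) (g₁ g₂ : SpaceGrp M) : SpaceGrp M :=
  (g₁.1 + (hRot M ^ (g₁.2).val).mulVec g₂.1, g₁.2 + g₂.2)

/-- The torsion-vector cocycle `f_τ((r₁,j₁),(r₂,j₂)) = τ((I + h + ⋯ + h^{j₁−1}) r₂)`. -/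
def fTau (M : ℕ) {A : Type*} [AddCommGroup A] (τ : (Fin 2 → ℤ) →+ A)
    (g₁ g₂ : SpaceGrp M) : A :=
  τ ((∑ k ∈ Finset.range (g₁.2).val, hRot M ^ k).mulVec g₂.1)

private lemma hM_cases {M : ℕ} (hM : M ∈ ({2, 3, 4, 6} : Set ℕ)) :
    M = 2 ∨ M = 3 ∨ M = 4 ∨ M = 6 := by simpa using hM

private lemma hpow_M {M : ℕ} (hM : M ∈ ({2, 3, 4, 6} : Set ℕ)) : hRot M ^ M = 1 := by
  rcases hM_cases hM with h | h | h | h <;> subst h <;> decide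

private lemma hsum_M {M : ℕ} (hM : M ∈ ({2, 3, 4, 6} : Set ℕ)) :
    ∑ k ∈ Finset.range M, hRot M ^ k = 0 := by
  rcases hM_cases hM with h | h | h | h <;> subst h <;> decide

private lemma S_key (M : ℕ) (m n : ℕ) :
    (∑ k ∈ Finset.range (m + n), hRot M ^ k)
      = (∑ k ∈ Finset.range m, hRot M ^ k)
        + (∑ k ∈ Finset.range n, hRot M ^ k) * hRot M ^ m := by
  rw [Finset.sum_range_add, Finset.sum_mul]
  congr 1
  refine Finset.sum_congr rfl fun k _ => ?_
  rw [pow_add]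
  exact pow_mul_comm _ _ _

private lemma S_add {M : ℕ} (h1 : hRot M ^ M = 1)
    (h0 : ∑ k ∈ Finset.range M, hRot M ^ k = 0)
    {a b : ℕ} (ha : a < M) (hb : b < M) :
    (∑ k ∈ Finset.range ((a + b) % M), hRot M ^ k)
      = (∑ k ∈ Finset.range b, hRot M ^ k)
        + (∑ k ∈ Finset.range a, hRot M ^ k) * hRot M ^ b := by
  rcases lt_or_ge (a + b) M with hlt | hge
  · rw [Nat.mod_eq_of_lt hlt, add_comm a b, S_key]
  · have hmod : (a + b) % M = a + b - M := by
      rw [Nat.mod_eq_sub_mod hge, Nat.mod_eq_of_lt (by omega)]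
    have hMt : M + (a + b - M) = b + a := by omega
    have := S_key M M (a + b - M)
    rw [hMt, S_key M b a, h1, h0, mul_one, zero_add] at this
    rw [hmod, this]

/-- `f_τ` is an `A`-valued 2-cocycle on `ℤ² ⋊ ℤ/M`, and it is a coboundary iff
`τ = χ ∘ (I − h)` for some homomorphism `χ : ℤ² → A`. -/
theorem torsion_vector_cocycle (M : ℕ) (hM : M ∈ ({2, 3, 4, 6} : Set ℕ))
    {A : Type*} [AddCommGroup A] (τ : (Fin 2 → ℤ) →+ A) :
    (∀ g₁ g₂ g₃ : SpaceGrp M,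
      fTau M τ g₂ g₃ - fTau M τ (spaceMul M g₁ g₂) g₃ + fTau M τ g₁ (spaceMul M g₂ g₃) -
        fTau M τ g₁ g₂ = 0) ∧
    ((∃ u : SpaceGrp M → A, ∀ g₁ g₂ : SpaceGrp M,
        fTau M τ g₁ g₂ = u g₂ - u (spaceMul M g₁ g₂) + u g₁) ↔
      ∃ χ : (Fin 2 → ℤ) →+ A, ∀ r : Fin 2 → ℤ, τ r = χ ((1 - hRot M).mulVec r)) := by
  haveI : NeZero M := ⟨by rcases hM_cases hM with h | h | h | h <;> omega⟩
  haveI : Fact (1 < M) := ⟨by rcases hM_cases hM with h | h | h | h <;> omega⟩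
  have h1 := hpow_M hM
  have h0 := hsum_M hM
  constructor
  · intro g₁ g₂ g₃
    have hval : (g₁.2 + g₂.2).val = (g₁.2.val + g₂.2.val) % M := ZMod.val_add g₁.2 g₂.2
    simp only [fTau, spaceMul, hval, S_add h1 h0 (ZMod.val_lt g₁.2) (ZMod.val_lt g₂.2),
      Matrix.add_mulVec, Matrix.mulVec_add, map_add, Matrix.mulVec_mulVec]
    abel
  · constructor
    · rintro ⟨u, hu⟩
      -- additivity of `r ↦ u (r, 0)`
      have hz : ∀ r₁ r₂ : Fin 2 → ℤ, u (r₁ + r₂, 0) = u (r₁, 0) + u (r₂, 0) := by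
        intro r₁ r₂
        have h' := (hu (r₁, (0 : ZMod M)) (r₂, (0 : ZMod M))).symm
        simp only [fTau, spaceMul, ZMod.val_zero, Finset.range_zero, Finset.sum_empty,
          Matrix.zero_mulVec, map_zero, pow_zero, Matrix.one_mulVec, add_zero] at h'
        rw [sub_add_eq_add_sub, sub_eq_zero] at h'
        rw [← h', add_comm]
      refine ⟨AddMonoidHom.mk' (fun r => u (r, 0)) hz, fun r => ?_⟩
      have hval1 : ((1 : ZMod M)).val = 1 := ZMod.val_one M
      have e1 := hu ((0 : Fin 2 → ℤ), (1 : ZMod M)) (r, (0 : ZMod M))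
      have e2 := hu ((hRot M).mulVec r, (0 : ZMod M)) ((0 : Fin 2 → ℤ), (1 : ZMod M))
      simp only [fTau, spaceMul, hval1, ZMod.val_zero, Finset.range_zero, Finset.sum_empty,
        Matrix.zero_mulVec, map_zero, Finset.sum_range_one, pow_zero, pow_one,
        Matrix.one_mulVec, Matrix.mulVec_zero, add_zero, zero_add] at e1 e2
      rw [eq_comm, sub_add_eq_add_sub, sub_eq_zero] at e2
      have key : τ r = u (r, 0) - u ((hRot M).mulVec r, 0) := by
        rw [e1, ← e2]; abel
      simp only [AddMonoidHom.mk'_apply, Matrix.sub_mulVec, Matrix.one_mulVec, key]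
      have hsub : ∀ a b : Fin 2 → ℤ, u (a - b, 0) = u (a, 0) - u (b, 0) := by
        intro a b
        have := hz (a - b) b
        rw [sub_add_cancel] at this
        rw [this]; abel
      rw [hsub]
    · rintro ⟨χ, hχ⟩
      refine ⟨fun g => χ g.1, fun g₁ g₂ => ?_⟩
      have tele : (1 - hRot M) * (∑ k ∈ Finset.range (g₁.2).val, hRot M ^ k)
          = 1 - hRot M ^ (g₁.2).val := by
        have := mul_geom_sum (hRot M) (g₁.2).val
        calc (1 - hRot M) * (∑ k ∈ Finset.range (g₁.2).val, hRot M ^ k)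
            = -((hRot M - 1) * ∑ k ∈ Finset.range (g₁.2).val, hRot M ^ k) := by
              rw [← neg_mul, neg_sub]
          _ = -(hRot M ^ (g₁.2).val - 1) := by rw [this]
          _ = 1 - hRot M ^ (g₁.2).val := neg_sub _ _
      simp only [fTau, spaceMul, hχ, Matrix.mulVec_mulVec, tele, Matrix.sub_mulVec,
        Matrix.one_mulVec, map_sub, map_add]
      abel
end
end

section
/- Fix M ∈ {2,3,4,6}, h = h_M, a real number φ, and let G = U(1)⋉_φ(ℤ²⋊ℤ_M) be the magnetic space group; let A be a finite abelian group (written additively). Then a function χ : G → A is a group homomorphism if and only if there exist a group homomorphism τ : ℤ² → A with τ ∘ h = τ and an element a ∈ A with M·a = 0 such that χ(z,r,j) = τ(r) + j·a for all (z,r,j) ∈ G (with representative j ∈ {0,…,M−1}; the expression j·a is well defined since M·a = 0). In particular, every homomorphism G → A vanishes on the central U(1) subgroup. -/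
open Matrix

noncomputable section

lemma crossZ_zero_left (r : Fin 2 → ℤ) : crossZ 0 r = 0 := by simp [crossZ]

lemma crossZ_zero_right (r : Fin 2 → ℤ) : crossZ r 0 = 0 := by simp [crossZ]

lemma mod_smul_eq {A : Type*} [AddCommGroup A] {M : ℕ} {a : A} (ha : M • a = 0) (n : ℕ) :
    (n % M) • a = n • a := by
  conv_rhs => rw [← Nat.div_add_mod n M]
  rw [add_nsmul, mul_nsmul, ha, smul_zero, zero_add]

lemma val_add_smul {A : Type*} [AddCommGroup A] {M : ℕ} [NeZero M] {a : A} (ha : M • a = 0)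
    (j j' : ZMod M) : (j + j').val • a = j.val • a + j'.val • a := by
  rw [ZMod.val_add, mod_smul_eq ha, add_nsmul]

lemma tau_pow_inv {A : Type*} [AddCommGroup A] {M : ℕ} (τ : (Fin 2 → ℤ) →+ A)
    (hτ : ∀ r : Fin 2 → ℤ, τ ((hRot M).mulVec r) = τ r) (n : ℕ) (r : Fin 2 → ℤ) :
    τ ((hRot M ^ n).mulVec r) = τ r := by
  induction n with
  | zero => simp
  | succ n ih => rw [pow_succ', ← Matrix.mulVec_mulVec, hτ, ih]

/-- A function `χ` from the magnetic space group to a finite abelian group `A` is a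
homomorphism iff `χ(z,r,j) = τ(r) + j·a` for an `h`-invariant homomorphism
`τ : ℤ² → A` and an `M`-torsion element `a ∈ A`; in particular every homomorphism
vanishes on the central `U(1)`. -/
theorem magnetic_space_group_homomorphisms (M : ℕ) (hM : M ∈ ({2, 3, 4, 6} : Set ℕ)) (φ : ℝ)
    {A : Type*} [AddCommGroup A] [Finite A] (χ : MagSp M → A) :
    ((∀ g₁ g₂ : MagSp M, χ (magSpMul M φ g₁ g₂) = χ g₁ + χ g₂) ↔
      ∃ (τ : (Fin 2 → ℤ) →+ A) (a : A),
        (∀ r : Fin 2 → ℤ, τ ((hRot M).mulVec r) = τ r) ∧ M • a = 0 ∧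
          ∀ g : MagSp M, χ g = τ g.2.1 + (g.2.2).val • a) ∧
    ((∀ g₁ g₂ : MagSp M, χ (magSpMul M φ g₁ g₂) = χ g₁ + χ g₂) →
      ∀ z : AddCircle (1 : ℝ), χ (z, 0, 0) = 0) := by
  have hM2 : 2 ≤ M := by
    simp only [Set.mem_insert_iff, Set.mem_singleton_iff] at hM
    rcases hM with h | h | h | h <;> omega
  haveI : NeZero M := ⟨by omega⟩
  haveI : Fact (1 < M) := ⟨by omega⟩
  -- Forward direction main construction
  have main : (∀ g₁ g₂ : MagSp M, χ (magSpMul M φ g₁ g₂) = χ g₁ + χ g₂) →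
      ∃ (τ : (Fin 2 → ℤ) →+ A) (a : A),
        (∀ r : Fin 2 → ℤ, τ ((hRot M).mulVec r) = τ r) ∧ M • a = 0 ∧
          ∀ g : MagSp M, χ g = τ g.2.1 + (g.2.2).val • a := by
    intro H
    -- central part is additive
    have hz : ∀ z z' : AddCircle (1 : ℝ), χ (z + z', 0, 0) = χ (z, 0, 0) + χ (z', 0, 0) := by
      intro z z'
      have := H (z, 0, 0) (z', 0, 0)
      simpa [magSpMul, crossZ_zero_left, Matrix.mulVec_zero] using this
    have he : χ ((0 : AddCircle (1 : ℝ)), 0, 0) = 0 := by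
      have h := hz 0 0
      rw [add_zero] at h
      exact left_eq_add.mp h
    have hzn : ∀ (n : ℕ) (z : AddCircle (1 : ℝ)), χ (n • z, 0, 0) = n • χ (z, 0, 0) := by
      intro n
      induction n with
      | zero => intro z; simpa using he
      | succ n ih => intro z; rw [succ_nsmul, succ_nsmul, hz, ih]
    -- central U(1) maps to 0 since A is finite and the circle is divisible
    have hcent : ∀ z : AddCircle (1 : ℝ), χ (z, 0, 0) = 0 := by
      intro z
      obtain ⟨x, rfl⟩ := QuotientAddGroup.mk_surjective z
      set n := Nat.card A with hn
      have hn0 : 0 < n := Nat.card_pos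
      have hx : ((x : AddCircle (1 : ℝ))) = n • ((x / n : ℝ) : AddCircle (1 : ℝ)) := by
        rw [← QuotientAddGroup.mk_nsmul]
        congr 1
        field_simp
        have hn' : (n : ℝ) ≠ 0 := Nat.cast_ne_zero.mpr hn0.ne'
        rw [nsmul_eq_mul, mul_div_assoc', mul_comm, mul_div_assoc, div_self hn', mul_one]
      rw [hx, hzn]
      simp [hn]
    -- the central part splits off
    have hsplit : ∀ (z : AddCircle (1 : ℝ)) (r : Fin 2 → ℤ) (j : ZMod M),
        χ (z, r, j) = χ (0, r, j) := by
      intro z r j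
      have h1 := H ((z, 0, 0) : MagSp M) ((0, r, j) : MagSp M)
      have h2 := H (((0 : AddCircle (1 : ℝ)), 0, 0) : MagSp M) ((0, r, j) : MagSp M)
      simp only [magSpMul, crossZ_zero_left, ZMod.val_zero, pow_zero, Matrix.one_mulVec,
        Int.cast_zero, mul_zero, zero_add, add_zero, QuotientAddGroup.mk_zero] at h1 h2
      rw [h1, h2, hcent, hcent, zero_add, zero_add]
    -- translation part
    have hr : ∀ r r' : Fin 2 → ℤ, χ (0, r + r', 0) = χ (0, r, 0) + χ (0, r', 0) := by
      intro r r'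
      have := H (((0 : AddCircle (1 : ℝ)), r, 0) : MagSp M) ((0, r', 0) : MagSp M)
      simp only [magSpMul, ZMod.val_zero, pow_zero, Matrix.one_mulVec, add_zero,
        zero_add] at this
      rw [← this]
      exact (hsplit _ _ _).symm
    set τ : (Fin 2 → ℤ) →+ A := AddMonoidHom.mk' (fun r => χ (0, r, 0)) hr with hτdef
    set a : A := χ ((0 : AddCircle (1 : ℝ)), 0, (1 : ZMod M)) with hadef
    -- rotation part is additive
    have hj : ∀ j j' : ZMod M, χ (0, 0, j + j') = χ (0, 0, j) + χ (0, 0, j') := by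
      intro j j'
      have := H (((0 : AddCircle (1 : ℝ)), 0, j) : MagSp M) ((0, 0, j') : MagSp M)
      simpa [magSpMul, crossZ_zero_left, Matrix.mulVec_zero] using this
    have hjn : ∀ n : ℕ, χ ((0 : AddCircle (1 : ℝ)), 0, (n : ZMod M)) = n • a := by
      intro n
      induction n with
      | zero => simpa using he
      | succ n ih => rw [Nat.cast_succ, hj, ih, succ_nsmul]
    have hMa : M • a = 0 := by
      have := hjn M
      rwa [ZMod.natCast_self, he, eq_comm] at this
    -- h-invariance of τ
    have hone : (1 : ZMod M).val = 1 := ZMod.val_one M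
    have hinv : ∀ r : Fin 2 → ℤ, τ ((hRot M).mulVec r) = τ r := by
      intro r
      have h1 := H (((0 : AddCircle (1 : ℝ)), 0, (1 : ZMod M)) : MagSp M) ((0, r, 0) : MagSp M)
      have h2 := H (((0 : AddCircle (1 : ℝ)), (hRot M).mulVec r, 0) : MagSp M)
        ((0, 0, (1 : ZMod M)) : MagSp M)
      simp only [magSpMul, crossZ_zero_left, crossZ_zero_right, Matrix.mulVec_zero, ZMod.val_zero,
        pow_zero, Matrix.one_mulVec, hone, pow_one, Int.cast_zero, mul_zero, add_zero,
        zero_add, QuotientAddGroup.mk_zero] at h1 h2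
      simp only [hτdef, AddMonoidHom.mk'_apply]
      have key := h1.symm.trans h2
      rw [add_comm (χ ((0 : AddCircle (1:ℝ)), (hRot M).mulVec r, 0))] at key
      exact (add_left_cancel key).symm
    refine ⟨τ, a, hinv, hMa, ?_⟩
    rintro ⟨z, r, j⟩
    have hd := H (((0 : AddCircle (1 : ℝ)), r, 0) : MagSp M) ((0, 0, j) : MagSp M)
    simp only [magSpMul, crossZ_zero_right, Matrix.mulVec_zero, ZMod.val_zero, pow_zero,
      Int.cast_zero, mul_zero, add_zero, zero_add, QuotientAddGroup.mk_zero] at hd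
    have hjv : χ ((0 : AddCircle (1 : ℝ)), 0, j) = j.val • a := by
      have h := hjn j.val
      rwa [ZMod.natCast_rightInverse j] at h
    show χ (z, r, j) = τ r + j.val • a
    calc χ (z, r, j) = χ (0, r, j) := hsplit z r j
      _ = χ ((0 : AddCircle (1 : ℝ)), r, 0) + χ ((0 : AddCircle (1 : ℝ)), 0, j) := hd
      _ = τ r + j.val • a := by rw [hjv]; rfl
  constructor
  · constructor
    · exact main
    · rintro ⟨τ, a, hinv, hMa, hform⟩ g₁ g₂
      obtain ⟨z₁, r₁, j₁⟩ := g₁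
      obtain ⟨z₂, r₂, j₂⟩ := g₂
      simp only [magSpMul, hform]
      rw [map_add, tau_pow_inv τ hinv, val_add_smul hMa]
      abel
  · intro H z
    obtain ⟨τ, a, hinv, hMa, hform⟩ := main H
    rw [hform]
    simp
end
end

section
/- Let N be an even positive integer, M ≥ 1 an integer, and q ∈ ℤ; set d = gcd(M,N). Then the set {exp(2πi·qu/N)·exp(iπ·M·u²/N) : u ∈ ℤ with N dividing M·u} is a finite cyclic subgroup of the circle group of unit complex numbers, of order 2d / gcd(2d, 2q + MN/d). -/
/-- For the `1/N` Laughlin topological order (`N` even) with `ℤ_M` rotational symmetry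
fractionalization class `q`, the set of relabeling phases
`{exp(2πi qu/N)·exp(iπ M u²/N) : u ∈ ℤ, N ∣ M u}` is exactly the group of `P`-th roots of
unity with `P = 2d / gcd(2d, 2q + MN/d)`, `d = gcd(M,N)`. -/
theorem laughlin_relabeling_phases (N : ℕ) (hN : 0 < N) (hNeven : Even N)
    (M : ℕ) (hM : 1 ≤ M) (q : ℤ) :
    {z : ℂ | ∃ u : ℤ, (N : ℤ) ∣ (M : ℤ) * u ∧
        z = Complex.exp (2 * (Real.pi : ℂ) * Complex.I * (q : ℂ) * (u : ℂ) / (N : ℂ)) *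
          Complex.exp ((Real.pi : ℂ) * Complex.I * (M : ℂ) * (u : ℂ) ^ 2 / (N : ℂ))} =
      {z : ℂ | z ^ (2 * Nat.gcd M N /
        Int.gcd (2 * (Nat.gcd M N : ℤ)) (2 * q + ((M * N / Nat.gcd M N : ℕ) : ℤ))) = 1} := by
  have hd0 : 0 < Nat.gcd M N := Nat.gcd_pos_of_pos_right M hN
  set d : ℕ := Nat.gcd M N with hd
  set L : ℕ := M * N / d with hLdef
  set g : ℕ := Int.gcd (2 * (d : ℤ)) (2 * q + (L : ℤ)) with hgdef
  set P : ℕ := 2 * d / g with hPdef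
  set n' : ℕ := N / d with hn'def
  have hdM : d ∣ M := Nat.gcd_dvd_left M N
  have hdN : d ∣ N := Nat.gcd_dvd_right M N
  have hdn : d * n' = N := Nat.mul_div_cancel' hdN
  have hL : L = M * n' := by rw [hLdef, hn'def, Nat.mul_div_assoc M hdN]
  have hNL : N ∣ L := by
    obtain ⟨m, hm⟩ := hdM
    exact ⟨m, by rw [hL, hm, ← hdn]; ring⟩
  have hg0 : 0 < g := by
    rw [hgdef]
    exact Int.gcd_pos_iff.mpr (Or.inl (by positivity))
  have hg2d : g ∣ 2 * d := by
    have h : ((2 * (d : ℤ)).gcd (2 * q + (L : ℤ)) : ℤ) ∣ 2 * (d : ℤ) := Int.gcd_dvd_left _ _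
    rw [← hgdef] at h
    exact_mod_cast h
  have hgP : g * P = 2 * d := Nat.mul_div_cancel' hg2d
  obtain ⟨t, ht⟩ : (g : ℤ) ∣ (2 * q + (L : ℤ)) := by
    have h : ((2 * (d : ℤ)).gcd (2 * q + (L : ℤ)) : ℤ) ∣ 2 * q + (L : ℤ) := Int.gcd_dvd_right _ _
    rwa [← hgdef] at h
  have hNc : (N : ℂ) ≠ 0 := Nat.cast_ne_zero.mpr hN.ne'
  have h2dZ : (g : ℤ) * (P : ℤ) = 2 * (d : ℤ) := by exact_mod_cast hgP
  have hdnZ : (d : ℤ) * (n' : ℤ) = (N : ℤ) := by exact_mod_cast hdn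
  have hNLZ : (N : ℤ) ∣ (L : ℤ) := Int.natCast_dvd_natCast.mpr hNL
  -- exp equality from divisibility of exponent difference by 2N
  have key : ∀ A B : ℤ, (2 * (N : ℤ)) ∣ (A - B) →
      Complex.exp ((Real.pi : ℂ) * Complex.I * (A : ℂ) / N)
        = Complex.exp ((Real.pi : ℂ) * Complex.I * (B : ℂ) / N) := by
    rintro A B ⟨k, hk⟩
    rw [Complex.exp_eq_exp_iff_exists_int]
    refine ⟨k, ?_⟩
    have hA : (A : ℂ) = (B : ℂ) + 2 * (N : ℂ) * (k : ℂ) := by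
      have : A = B + 2 * (N : ℤ) * k := by linarith [hk]
      exact_mod_cast this
    rw [hA]
    field_simp
  -- combine the two exponentials
  have comb : ∀ u : ℤ,
      Complex.exp (2 * (Real.pi : ℂ) * Complex.I * (q : ℂ) * (u : ℂ) / (N : ℂ)) *
        Complex.exp ((Real.pi : ℂ) * Complex.I * (M : ℂ) * (u : ℂ) ^ 2 / (N : ℂ))
      = Complex.exp ((Real.pi : ℂ) * Complex.I * ((2 * q * u + (M : ℤ) * u ^ 2 : ℤ) : ℂ) / N) := by
    intro u
    rw [← Complex.exp_add]
    congr 1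
    push_cast
    field_simp
  -- reduction for u = n' * v
  have hNn'L : (N : ℤ) ∣ (n' : ℤ) * (L : ℤ) := Dvd.dvd.mul_left hNLZ _
  have red : ∀ v : ℤ,
      Complex.exp ((Real.pi : ℂ) * Complex.I *
          ((2 * q * ((n' : ℤ) * v) + (M : ℤ) * ((n' : ℤ) * v) ^ 2 : ℤ) : ℂ) / N)
      = Complex.exp ((Real.pi : ℂ) * Complex.I * (((n' : ℤ) * ((2 * q + (L : ℤ)) * v) : ℤ) : ℂ) / N) := by
    intro v
    apply key
    obtain ⟨w, hw⟩ := Int.even_mul_succ_self (v - 1)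
    have hvv : v ^ 2 - v = 2 * w := by linear_combination hw
    obtain ⟨c, hc⟩ := hNn'L
    refine ⟨c * w, ?_⟩
    have hLZ : (L : ℤ) = (M : ℤ) * (n' : ℤ) := by exact_mod_cast hL
    linear_combination (-(n' : ℤ) * v ^ 2) * hLZ + ((n' : ℤ) * (L : ℤ)) * hvv + (2 * w) * hc
  ext z
  simp only [Set.mem_setOf_eq]
  constructor
  · rintro ⟨u, hdvd, rfl⟩
    -- extract v with u = n' * v
    have hcop : IsCoprime ((n' : ℕ) : ℤ) ((M / d : ℕ) : ℤ) := by
      rw [Int.isCoprime_iff_gcd_eq_one]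
      have := Nat.coprime_div_gcd_div_gcd (m := M) (n := N) hd0
      rw [Int.gcd_natCast_natCast]
      exact Nat.coprime_comm.mp this
    obtain ⟨v, hv⟩ : ((n' : ℕ) : ℤ) ∣ u := by
      obtain ⟨c, hc⟩ := hdvd
      obtain ⟨m, hm⟩ := hdM
      apply hcop.dvd_of_dvd_mul_left
      refine ⟨c, ?_⟩
      have hmZ : (M : ℤ) = (d : ℤ) * (m : ℤ) := by exact_mod_cast hm
      have hMd : ((M / d : ℕ) : ℤ) = (m : ℤ) := by
        rw [hm, Nat.mul_div_cancel_left m hd0]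
      have hdne : (d : ℤ) ≠ 0 := by exact_mod_cast hd0.ne'
      apply mul_left_cancel₀ hdne
      rw [hMd]
      calc (d : ℤ) * ((m : ℤ) * u) = (M : ℤ) * u := by rw [hmZ]; ring
        _ = (N : ℤ) * c := hc
        _ = (d : ℤ) * ((n' : ℤ) * c) := by rw [← hdnZ]; ring
    rw [comb u, hv, red v]
    rw [← Complex.exp_nat_mul]
    have harg : (P : ℂ) * ((Real.pi : ℂ) * Complex.I * (((n' : ℤ) * ((2 * q + (L : ℤ)) * v) : ℤ) : ℂ) / N)
        = (Real.pi : ℂ) * Complex.I * (((P : ℤ) * ((n' : ℤ) * ((2 * q + (L : ℤ)) * v)) : ℤ) : ℂ) / N := by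
      push_cast
      ring
    rw [harg, key _ 0 ⟨t * v, by rw [ht]; linear_combination ((n' : ℤ) * t * v) * h2dZ + (2 * t * v) * hdnZ⟩]
    simp
  · intro hz
    have hP0 : 0 < P := Nat.div_pos (Nat.le_of_dvd (by positivity) hg2d) hg0
    haveI : NeZero P := ⟨hP0.ne'⟩
    obtain ⟨k, hkP, hk⟩ := (Complex.isPrimitiveRoot_exp P hP0.ne').eq_pow_of_pow_eq_one hz
    -- coprimality of P and t
    have hgZne : (g : ℤ) ≠ 0 := by exact_mod_cast hg0.ne'
    have hcopPt : IsCoprime ((P : ℕ) : ℤ) t := by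
      rw [Int.isCoprime_iff_gcd_eq_one]
      have h1 : 0 < Int.gcd (2 * (d : ℤ)) (2 * q + (L : ℤ)) := hgdef ▸ hg0
      have h2 := Int.gcd_div_gcd_div_gcd h1
      have hPe : (2 * (d : ℤ)) / ((Int.gcd (2 * (d : ℤ)) (2 * q + (L : ℤ)) : ℕ) : ℤ) = ((P : ℕ) : ℤ) := by
        rw [← hgdef, hPdef]
        push_cast [Int.natCast_ediv]
        norm_num
      have hte : (2 * q + (L : ℤ)) / ((Int.gcd (2 * (d : ℤ)) (2 * q + (L : ℤ)) : ℕ) : ℤ) = t := by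
        rw [← hgdef, ht]
        exact Int.mul_ediv_cancel_left t hgZne
      rwa [hPe, hte] at h2
    obtain ⟨a, b, hab⟩ := hcopPt
    set v : ℤ := b * k with hvdef
    have hts : ∃ s : ℤ, t * v = (k : ℤ) + (P : ℤ) * s := by
      exact ⟨-a * k, by linear_combination (k : ℤ) * hab⟩
    obtain ⟨s, hts⟩ := hts
    refine ⟨(n' : ℤ) * v, ?_, ?_⟩
    · obtain ⟨c, hc⟩ := hNLZ
      refine ⟨c * v, ?_⟩
      have hLZ : (L : ℤ) = (M : ℤ) * (n' : ℤ) := by exact_mod_cast hL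
      linear_combination v * hc - v * hLZ
    · rw [comb, red v]
      have hzk : z = Complex.exp ((k : ℂ) * (2 * (Real.pi : ℂ) * Complex.I / P)) := by
        rw [Complex.exp_nat_mul, hk]
      have h1 : ((t * v : ℤ) : ℂ) = (k : ℂ) + (P : ℂ) * (s : ℂ) := by exact_mod_cast hts
      have h2 : (g : ℂ) * (P : ℂ) = 2 * (d : ℂ) := by exact_mod_cast hgP
      have h3 : (d : ℂ) * (n' : ℂ) = (N : ℂ) := by exact_mod_cast hdn
      have h4 : ((2 * q + (L : ℤ) : ℤ) : ℂ) = (g : ℂ) * (t : ℂ) := by exact_mod_cast ht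
      have hPc : (P : ℂ) ≠ 0 := Nat.cast_ne_zero.mpr hP0.ne'
      push_cast at h1 h4
      have e2 : (Real.pi : ℂ) * Complex.I * (((n' : ℤ) * ((2 * q + (L : ℤ)) * v) : ℤ) : ℂ) / N
          = 2 * (Real.pi : ℂ) * Complex.I * ((t : ℂ) * (v : ℂ)) / P := by
        rw [div_eq_div_iff hNc hPc]
        push_cast
        linear_combination ((Real.pi : ℂ) * Complex.I * (n' : ℂ) * (v : ℂ) * (P : ℂ)) * h4 +
          ((Real.pi : ℂ) * Complex.I * (n' : ℂ) * (t : ℂ) * (v : ℂ)) * h2 +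
          (2 * (Real.pi : ℂ) * Complex.I * (t : ℂ) * (v : ℂ)) * h3
      rw [hzk, e2, Complex.exp_eq_exp_iff_exists_int]
      refine ⟨-s, ?_⟩
      rw [show (t : ℂ) * (v : ℂ) = (k : ℂ) + (P : ℂ) * (s : ℂ) by exact_mod_cast h1]
      push_cast
      field_simp
      ring
end
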